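/- For a relational Horn logic formula F and a relational structure X, interpretations of F in X are in bijection with morphisms of relational structures from the classifying structure [F] to X. -/

import Mathlib

open CategoryTheory Limits

/-- A relational signature: a set of sorts and a set of relation symbols, each with an
arity, i.e. a finite list of sorts. -/
structure RelSig where
  S : Type
  R : Type
  n : R → ℕ
  sorts : ∀ r : R, Fin (n r) → S

/-- A relational structure: a carrier set for each sort and, for each relation symbol,
a set of tuples of matching sorts. -/
structure RelStr (σ : RelSig) where
  carrier : σ.S → Type
  rel : ∀ r : σ.R, Set (∀ i : Fin (σ.n r), carrier (σ.sorts r i))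

variable {σ : RelSig}

/-- A morphism of relational structures: sort-indexed functions preserving all
relations. -/
@[ext]
structure RelMor (X Y : RelStr σ) where
  app : ∀ s, X.carrier s → Y.carrier s
  map_rel : ∀ r t, t ∈ X.rel r → (fun i => app _ (t i)) ∈ Y.rel r

/-- The category of relational structures over a signature. -/
instance : Category (RelStr σ) where
  Hom := RelMor
  id X := ⟨fun _ x => x, fun _ _ ht => ht⟩
  comp f g := ⟨fun s x => g.app s (f.app s x), fun r t ht => g.map_rel r _ (f.map_rel r t ht)⟩
  id_comp _ := rfl
  comp_id _ := rfl
  assoc _ _ _ := rfl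

/-- An RHL atom: a relation atom `r(v₁,…,vₙ)`, a sort quantification atom `v↓`, or an
equality atom `u ≡ v` between variables of the same sort. Variables of sort `s` are
represented by natural-number names paired with the sort `s`. -/
inductive Atom (σ : RelSig) where
  | rel (r : σ.R) (v : Fin (σ.n r) → ℕ)
  | sortQ (s : σ.S) (u : ℕ)
  | eq (s : σ.S) (u w : ℕ)

/-- An RHL formula: a finite conjunction of atoms. -/
abbrev Formula (σ : RelSig) := List (Atom σ)

/-- The variable `(s, k)` occurs in an atom. -/
def Atom.occurs {σ : RelSig} : Atom σ → σ.S → ℕ → Prop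
  | .rel r v, s, k => ∃ i, σ.sorts r i = s ∧ v i = k
  | .sortQ s' u, s, k => s' = s ∧ u = k
  | .eq s' u w, s, k => s' = s ∧ (u = k ∨ w = k)

/-- The variable `(s, k)` occurs in a formula. -/
def occurs {σ : RelSig} (F : Formula σ) (s : σ.S) (k : ℕ) : Prop :=
  ∃ a ∈ F, a.occurs s k

theorem occurs_rel {σ : RelSig} {F : Formula σ} {r : σ.R} {v : Fin (σ.n r) → ℕ}
    (h : Atom.rel r v ∈ F) (i : Fin (σ.n r)) : occurs F (σ.sorts r i) (v i) :=
  ⟨_, h, i, rfl, rfl⟩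

theorem occurs_eql {σ : RelSig} {F : Formula σ} {s : σ.S} {u w : ℕ}
    (h : Atom.eq s u w ∈ F) : occurs F s u :=
  ⟨_, h, rfl, Or.inl rfl⟩

theorem occurs_eqr {σ : RelSig} {F : Formula σ} {s : σ.S} {u w : ℕ}
    (h : Atom.eq s u w ∈ F) : occurs F s w :=
  ⟨_, h, rfl, Or.inr rfl⟩

/-- An interpretation of a formula `F` in a relational structure `X`: an assignment of
elements of matching sorts to the variables occurring in `F` making all atoms of `F`
hold. (Sort quantification atoms impose no condition beyond occurrence.) -/
structure Interp {σ : RelSig} (F : Formula σ) (X : RelStr σ) where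
  app : ∀ s k, occurs F s k → X.carrier s
  rel_holds : ∀ r v (h : Atom.rel r v ∈ F),
    (fun i => app (σ.sorts r i) (v i) (occurs_rel h i)) ∈ X.rel r
  eq_holds : ∀ s u w (h : Atom.eq s u w ∈ F),
    app s u (occurs_eql h) = app s w (occurs_eqr h)

/-- The variables of sort `s` occurring in `F`. -/
def Vars {σ : RelSig} (F : Formula σ) (s : σ.S) : Type := { k : ℕ // occurs F s k }

/-- Two variables are related if `F` contains an equality atom between them. -/
def eqRel {σ : RelSig} (F : Formula σ) (s : σ.S) : Vars F s → Vars F s → Prop :=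
  fun u w => Atom.eq s u.1 w.1 ∈ F

/-- The classifying relational structure `[F]` of a formula `F`: carriers are the
occurring variables modulo the equalities asserted in `F`, and relations consist of the
tuples asserted in `F`. -/
def classify {σ : RelSig} (F : Formula σ) : RelStr σ where
  carrier s := Quot (eqRel F s)
  rel r := { t | ∃ (v : Fin (σ.n r) → ℕ) (h : Atom.rel r v ∈ F),
      ∀ i, t i = Quot.mk _ ⟨v i, occurs_rel h i⟩ }

/-- Interpretations of an RHL formula `F` in a relational structure `X` are in bijection
with morphisms `[F] ⟶ X` from the classifying structure of `F`. -/
theorem stmt_13 (F : Formula σ) (X : RelStr σ) :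
    Nonempty (Interp F X ≃ (classify F ⟶ X)) := by
  refine ⟨{
    toFun := fun I => {
      app := fun s => Quot.lift (fun v : Vars F s => I.app s v.1 v.2)
        (fun u w h => I.eq_holds s u.1 w.1 h)
      map_rel := by
        rintro r t ⟨v, hv, ht⟩
        have : (fun i => Quot.lift (fun x : Vars F (σ.sorts r i) =>
            I.app (σ.sorts r i) x.1 x.2) (fun u w h => I.eq_holds _ u.1 w.1 h) (t i))
            = fun i => I.app (σ.sorts r i) (v i) (occurs_rel hv i) := by
          funext i; rw [ht i]
        have h2 := I.rel_holds r v hv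
        rw [← this] at h2
        exact h2 }
    invFun := fun f => {
      app := fun s k h => f.app s (Quot.mk _ ⟨k, h⟩)
      rel_holds := fun r v h => f.map_rel r _ ⟨v, h, fun _ => rfl⟩
      eq_holds := fun s u w h => congrArg (f.app s) (Quot.sound h) }
    left_inv := fun I => rfl
    right_inv := fun f => by
      apply RelMor.ext
      funext s x
      induction x using Quot.ind
      rfl }⟩
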